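/- A group acting properly by automorphisms on a CAT(0) cube complex of finite dimension has the Haagerup property. -/

import Mathlib

open Set

/-- The Haagerup property: the group admits a proper affine isometric action on a
real Hilbert space. -/
def HasHaagerupProperty (G : Type*) [Group G] : Prop :=
  ∃ (H : Type) (_ : NormedAddCommGroup H) (_ : InnerProductSpace ℝ H) (_ : CompleteSpace H)
    (α : G → H → H),
    (∀ g, Isometry (α g)) ∧
    (∀ g h x, α (g * h) x = α g (α h x)) ∧
    (∀ x, α 1 x = x) ∧
    (∀ M : ℝ, {g : G | dist (α g 0) 0 ≤ M}.Finite)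

/-- Two walls cross if all four intersections of their half-spaces are nonempty. -/
def WallsCross {X Wl : Type} (side : Wl → X → Bool) (w w' : Wl) : Prop :=
  ∀ b b' : Bool, ∃ x : X, side w x = b ∧ side w' x = b'

set_option maxHeartbeats 2000000 in
/-- A group acting properly on a finite-dimensional CAT(0) cube complex has the Haagerup
property.  The cube complex is encoded by its hyperplane/wall structure: a wall space
`(X, Wl)` whose families of pairwise crossing walls have cardinality at most `D`
(finite dimension), on which `G` acts with the map `g ↦ g·x₀` proper with respect to the
wall (combinatorial) metric. -/
theorem haagerup_of_proper_action_on_finite_dim_cube_complex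
    {G : Type} [Group G] [Countable G] {X Wl : Type} (side : Wl → X → Bool)
    (hne : ∀ w : Wl, (∃ x, side w x = true) ∧ (∃ x, side w x = false))
    (hfin : ∀ x y : X, {w : Wl | side w x ≠ side w y}.Finite)
    (D : ℕ)
    (hdim : ∀ S : Set Wl, S.Pairwise (WallsCross side) → S.Finite ∧ S.ncard ≤ D)
    (ρ : G →* Equiv.Perm X) (π : G →* Equiv.Perm Wl)
    (hcompat : ∀ (g : G) (w : Wl) (x : X), side (π g w) (ρ g x) = side w x)
    (x₀ : X)
    (hproper : ∀ n : ℕ, {g : G | {w : Wl | side w x₀ ≠ side w (ρ g x₀)}.ncard ≤ n}.Finite) :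
    HasHaagerupProperty G := by
  classical
  have h2 : (0:ℝ) < (2:ENNReal).toReal := by norm_num
  -- the cocycle data
  set c : X → Wl → ℝ :=
    fun x w => (if side w x then (1:ℝ) else 0) - (if side w x₀ then 1 else 0) with hc
  have hsupp : ∀ x w, c x w ≠ 0 ↔ side w x₀ ≠ side w x := by
    intro x w
    rcases Bool.eq_false_or_eq_true (side w x) with h | h <;>
      rcases Bool.eq_false_or_eq_true (side w x₀) with h' | h' <;>
      simp [hc, h, h']
  have hmem : ∀ x, Memℓp (c x) 2 := by
    intro x
    apply memℓp_gen
    apply summable_of_ne_finset_zero (s := (hfin x₀ x).toFinset)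
    intro w hw
    have : c x w = 0 := by
      by_contra hne0
      exact hw (by simpa using (hsupp x w).1 hne0)
    simp [this, h2.ne']
  have hmemperm : ∀ (g : G) (v : lp (fun _ : Wl => ℝ) 2),
      Memℓp (fun w => v ((π g)⁻¹ w)) 2 := by
    intro g v
    apply memℓp_gen
    have h1 : Summable (fun w => ‖v w‖ ^ (2:ENNReal).toReal) :=
      (memℓp_gen_iff h2).1 (lp.memℓp v)
    exact (Equiv.summable_iff ((π g)⁻¹ : Equiv.Perm Wl)).2 h1
  set L : G → lp (fun _ : Wl => ℝ) 2 → lp (fun _ : Wl => ℝ) 2 :=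
    fun g v => ⟨fun w => v ((π g)⁻¹ w), hmemperm g v⟩ with hL
  set b : G → lp (fun _ : Wl => ℝ) 2 := fun g => ⟨c (ρ g x₀), hmem _⟩ with hb
  set α : G → lp (fun _ : Wl => ℝ) 2 → lp (fun _ : Wl => ℝ) 2 :=
    fun g v => L g v + b g with hα
  have hLapp : ∀ (g : G) (v : lp (fun _ : Wl => ℝ) 2) (w : Wl),
      (L g v : ∀ _ : Wl, ℝ) w = v ((π g)⁻¹ w) := fun g v w => rfl
  have hbapp : ∀ (g : G) (w : Wl), (b g : ∀ _ : Wl, ℝ) w = c (ρ g x₀) w := fun g w => rfl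
  have hLnorm : ∀ (g : G) (v : lp (fun _ : Wl => ℝ) 2), ‖L g v‖ = ‖v‖ := by
    intro g v
    rw [lp.norm_eq_tsum_rpow h2, lp.norm_eq_tsum_rpow h2]
    congr 1
    exact Equiv.tsum_eq ((π g)⁻¹ : Equiv.Perm Wl) (fun w => ‖v w‖ ^ (2:ENNReal).toReal)
  have hLsub : ∀ (g : G) (u v : lp (fun _ : Wl => ℝ) 2), L g u - L g v = L g (u - v) := by
    intro g u v
    apply lp.ext
    funext w
    simp only [lp.coeFn_sub, Pi.sub_apply, hLapp]
  refine ⟨lp (fun _ : Wl => ℝ) 2, inferInstance, inferInstance, inferInstance, α,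
    ?_, ?_, ?_, ?_⟩
  · intro g
    apply Isometry.of_dist_eq
    intro u v
    rw [dist_eq_norm, dist_eq_norm]
    have h : α g u - α g v = L g (u - v) := by
      simp only [hα]
      rw [add_sub_add_right_eq_sub, hLsub]
    rw [h, hLnorm]
  · intro g h v
    apply lp.ext
    funext w
    have e1 : side ((π g)⁻¹ w) (ρ h x₀) = side w (ρ (g * h) x₀) := by
      have := hcompat g ((π g)⁻¹ w) (ρ h x₀)
      simpa [map_mul] using this.symm
    have e2 : side ((π g)⁻¹ w) x₀ = side w (ρ g x₀) := by
      have := hcompat g ((π g)⁻¹ w) x₀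
      simpa using this.symm
    have r1 : (α g (α h v) : ∀ _ : Wl, ℝ) w
        = v ((π h)⁻¹ ((π g)⁻¹ w)) + (c (ρ h x₀) ((π g)⁻¹ w) + c (ρ g x₀) w) := by
      simp only [hα, lp.coeFn_add, Pi.add_apply, hLapp, hbapp]
      ring
    have r2 : (α (g * h) v : ∀ _ : Wl, ℝ) w = v ((π (g * h))⁻¹ w) + c (ρ (g * h) x₀) w := by
      simp only [hα, lp.coeFn_add, Pi.add_apply, hLapp, hbapp]
    rw [r1, r2]
    have e3 : (π (g * h))⁻¹ w = (π h)⁻¹ ((π g)⁻¹ w) := by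
      simp [map_mul, mul_inv_rev]
    rw [e3]
    congr 1
    simp only [hc, e1, e2]
    ring
  · intro v
    apply lp.ext
    funext w
    have r : (α 1 v : ∀ _ : Wl, ℝ) w = v ((π 1)⁻¹ w) + c (ρ 1 x₀) w := by
      simp only [hα, lp.coeFn_add, Pi.add_apply, hLapp, hbapp]
    rw [r]
    simp [hc]
    rfl
  · intro M
    apply (hproper ⌈M^2⌉₊).subset
    intro g hg
    simp only [Set.mem_setOf_eq] at hg ⊢
    have hα0 : α g 0 = b g := by
      apply lp.ext
      funext w
      have r : (α g 0 : ∀ _ : Wl, ℝ) w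
          = (0 : lp (fun _ : Wl => ℝ) 2) ((π g)⁻¹ w) + c (ρ g x₀) w := by
        simp only [hα, lp.coeFn_add, Pi.add_apply, hLapp, hbapp]
      rw [r]
      simp [hbapp]
    rw [hα0, dist_zero_right] at hg
    set s := (hfin x₀ (ρ g x₀)).toFinset with hs
    have hcard : (s.card : ℝ) ≤ ‖b g‖ ^ (2:ENNReal).toReal := by
      have hle := lp.sum_rpow_le_norm_rpow h2 (b g) s
      refine le_trans (le_of_eq ?_) hle
      rw [Finset.card_eq_sum_ones s, Nat.cast_sum]
      apply Finset.sum_congr rfl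
      intro w hw
      have hw' : side w x₀ ≠ side w (ρ g x₀) := by simpa [hs] using hw
      have h1 : ‖(b g : ∀ _ : Wl, ℝ) w‖ = 1 := by
        rw [hbapp]
        rcases Bool.eq_false_or_eq_true (side w (ρ g x₀)) with h | h <;>
          rcases Bool.eq_false_or_eq_true (side w x₀) with h' | h'
        · exact absurd (h'.trans h.symm) hw'
        · simp [hc, h, h']
        · simp [hc, h, h']
        · exact absurd (h'.trans h.symm) hw'
      rw [h1]
      simp
    have hM0 : (0:ℝ) ≤ M := le_trans (norm_nonneg _) hg
    have hle2 : (s.card : ℝ) ≤ M ^ 2 := by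
      calc (s.card : ℝ) ≤ ‖b g‖ ^ (2:ENNReal).toReal := hcard
        _ = ‖b g‖ ^ (2:ℕ) := by
            rw [show ((2:ENNReal).toReal) = ((2:ℕ):ℝ) by norm_num, Real.rpow_natCast]
        _ ≤ M ^ 2 := pow_le_pow_left₀ (norm_nonneg _) hg 2
    have hcard' : s.card ≤ ⌈M^2⌉₊ := by
      exact_mod_cast le_trans hle2 (Nat.le_ceil _)
    have hnc : {w : Wl | side w x₀ ≠ side w (ρ g x₀)}.ncard = s.card := by
      rw [hs]
      exact Set.ncard_eq_toFinset_card _ (hfin x₀ (ρ g x₀))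
    omega
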